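/- Let L₁,…,L_K be closed subspaces of a real Hilbert space H, T = P_K ∘ ⋯ ∘ P₁, and Y = L₁^⊥ + ⋯ + L_K^⊥. For every x₀ ∈ Y there exists a constant c(x₀) > 0 such that ‖Tⁿ x₀‖ ≤ c(x₀) · n^{-1/(4K√K + 2)} for all n ≥ 1. -/

import Mathlib

open Real Finset
set_option linter.unusedSectionVars false

section AP

variable {H : Type*} [NormedAddCommGroup H] [InnerProductSpace ℝ H] [CompleteSpace H]
variable {K : ℕ} (L : Fin K → Submodule ℝ H) [∀ k, CompleteSpace (L k)]

local notation "⟪" x ", " y "⟫" => @inner ℝ _ _ x y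

/-- apply projections along a list of indices, head first -/
noncomputable def pl (ls : List (Fin K)) (y : H) : H :=
  ls.foldl (fun w k => (Submodule.orthogonalProjection (L k) w : H)) y

@[simp] lemma pl_nil (y : H) : pl L [] y = y := rfl

lemma pl_cons (k : Fin K) (t : List (Fin K)) (y : H) :
    pl L (k :: t) y = pl L t (Submodule.orthogonalProjection (L k) y : H) := rfl

lemma pl_append (s t : List (Fin K)) (y : H) :
    pl L (s ++ t) y = pl L t (pl L s y) := List.foldl_append ..

lemma proj_norm_le (k : Fin K) (y : H) : ‖(Submodule.orthogonalProjection (L k) y : H)‖ ≤ ‖y‖ := by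
  have := (Submodule.orthogonalProjection (L k)).le_opNorm y
  have h2 := Submodule.orthogonalProjectionOnto_norm_le (L k)
  calc ‖(Submodule.orthogonalProjection (L k) y : H)‖ = ‖Submodule.orthogonalProjection (L k) y‖ := rfl
    _ ≤ ‖Submodule.orthogonalProjection (L k)‖ * ‖y‖ := this
    _ ≤ 1 * ‖y‖ := mul_le_mul_of_nonneg_right h2 (norm_nonneg y)
    _ = ‖y‖ := one_mul _

lemma proj_pythagoras (k : Fin K) (y : H) :
    ‖y‖ ^ 2 = ‖(Submodule.orthogonalProjection (L k) y : H)‖ ^ 2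
      + ‖y - (Submodule.orthogonalProjection (L k) y : H)‖ ^ 2 := by
  have h : ⟪(Submodule.orthogonalProjection (L k) y : H), y - (Submodule.orthogonalProjection (L k) y : H)⟫ = 0 := by
    exact (Submodule.sub_starProjection_mem_orthogonal (K := L k) y)
      ((Submodule.orthogonalProjection (L k) y : H)) (Submodule.orthogonalProjection (L k) y).2
  have := norm_add_sq_eq_norm_sq_add_norm_sq_of_inner_eq_zero _ _ h
  have e : (Submodule.orthogonalProjection (L k) y : H) + (y - (Submodule.orthogonalProjection (L k) y : H)) = y := by abel
  rw [e] at this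
  linarith

lemma norm_pl_le (ls : List (Fin K)) (y : H) : ‖pl L ls y‖ ≤ ‖y‖ := by
  induction ls generalizing y with
  | nil => simp
  | cons k t ih => exact le_trans (ih _) (proj_norm_le L k y)

lemma proj_adjoint (k : Fin K) (x y : H) :
    ⟪(Submodule.orthogonalProjection (L k) x : H), y⟫ = ⟪x, (Submodule.orthogonalProjection (L k) y : H)⟫ := by
  exact Submodule.inner_starProjection_left_eq_right (L k) x y

lemma pl_adjoint (ls : List (Fin K)) (x y : H) :
    ⟪pl L ls x, y⟫ = ⟪x, pl L ls.reverse y⟫ := by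
  induction ls generalizing x y with
  | nil => simp
  | cons k t ih =>
    rw [pl_cons, ih, List.reverse_cons, pl_append, proj_adjoint]
    rfl


lemma sqrt_combine {b x y : ℝ} (hb : 0 ≤ b) (hx : 0 ≤ x) (hy : 0 ≤ y) :
    x + Real.sqrt b * y ≤ Real.sqrt (1 + b) * Real.sqrt (x ^ 2 + y ^ 2) := by
  rw [← Real.sqrt_mul (by linarith)]
  rw [Real.le_sqrt (by positivity) (by positivity)]
  nlinarith [Real.sq_sqrt hb, Real.sqrt_nonneg b, sq_nonneg (Real.sqrt b * x - y)]

lemma pl_drop (ls : List (Fin K)) (y : H) :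
    ‖y - pl L ls y‖ ≤ Real.sqrt ls.length * Real.sqrt (‖y‖ ^ 2 - ‖pl L ls y‖ ^ 2) := by
  induction ls generalizing y with
  | nil => simp
  | cons k t ih =>
    set y' : H := (Submodule.orthogonalProjection (L k) y : H) with hy'
    have hpyth := proj_pythagoras L k y
    have h1 : ‖y - y'‖ = Real.sqrt (‖y‖ ^ 2 - ‖y'‖ ^ 2) := by
      rw [show ‖y‖ ^ 2 - ‖y'‖ ^ 2 = ‖y - y'‖ ^ 2 by linarith, Real.sqrt_sq (norm_nonneg _)]
    have hplcons : pl L (k :: t) y = pl L t y' := rfl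
    have h2 : ‖y - pl L (k :: t) y‖ ≤ ‖y - y'‖ + ‖y' - pl L t y'‖ := by
      rw [hplcons]
      calc ‖y - pl L t y'‖ = ‖(y - y') + (y' - pl L t y')‖ := by rw [sub_add_sub_cancel]
        _ ≤ ‖y - y'‖ + ‖y' - pl L t y'‖ := norm_add_le _ _
    have h3 := ih y'
    have hmono : ‖pl L t y'‖ ≤ ‖y'‖ := norm_pl_le L t y'
    have hx0 : (0:ℝ) ≤ ‖y‖ ^ 2 - ‖y'‖ ^ 2 := by nlinarith [norm_nonneg (y - y')]
    have hy0 : (0:ℝ) ≤ ‖y'‖ ^ 2 - ‖pl L t y'‖ ^ 2 := by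
      nlinarith [norm_nonneg (pl L t y'), norm_nonneg y']
    calc ‖y - pl L (k :: t) y‖ ≤ ‖y - y'‖ + ‖y' - pl L t y'‖ := h2
      _ ≤ Real.sqrt (‖y‖ ^ 2 - ‖y'‖ ^ 2)
          + Real.sqrt t.length * Real.sqrt (‖y'‖ ^ 2 - ‖pl L t y'‖ ^ 2) := by
          rw [h1]; gcongr
      _ ≤ Real.sqrt (1 + t.length) *
          Real.sqrt (Real.sqrt (‖y‖ ^ 2 - ‖y'‖ ^ 2) ^ 2
            + Real.sqrt (‖y'‖ ^ 2 - ‖pl L t y'‖ ^ 2) ^ 2) :=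
          sqrt_combine (by positivity) (Real.sqrt_nonneg _) (Real.sqrt_nonneg _)
      _ = Real.sqrt (k :: t).length * Real.sqrt (‖y‖ ^ 2 - ‖pl L (k :: t) y‖ ^ 2) := by
          rw [Real.sq_sqrt hx0, Real.sq_sqrt hy0, hplcons]
          congr 2
          · simp [List.length_cons]; ring
          · ring


lemma pl_inner_orthogonal (ls : List (Fin K)) (k : Fin K) (hk : k ∈ ls) (f u : H)
    (hf : f ∈ (L k)ᗮ) :
    |⟪u, f⟫| ≤ ‖f‖ * (Real.sqrt ls.length * Real.sqrt (‖u‖ ^ 2 - ‖pl L ls u‖ ^ 2)) := by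
  obtain ⟨s, t, rfl⟩ := List.append_of_mem hk
  set z : H := pl L (s ++ [k]) u with hz
  have hzmem : z ∈ L k := by
    rw [hz, pl_append]
    exact (Submodule.orthogonalProjection (L k) (pl L s u)).2
  have hzf : ⟪z, f⟫ = 0 := hf z hzmem
  have hsplit : pl L (s ++ k :: t) u = pl L t z := by
    rw [show s ++ k :: t = (s ++ [k]) ++ t by simp, pl_append]
  have hmono : ‖pl L (s ++ k :: t) u‖ ≤ ‖z‖ := by rw [hsplit]; exact norm_pl_le L t z
  have hzu : ‖z‖ ≤ ‖u‖ := norm_pl_le L (s ++ [k]) u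
  have hdrop : ‖u - z‖ ≤ Real.sqrt (s ++ [k]).length * Real.sqrt (‖u‖ ^ 2 - ‖z‖ ^ 2) :=
    pl_drop L (s ++ [k]) u
  have h1 : |⟪u, f⟫| = |⟪u - z, f⟫| := by
    rw [inner_sub_left, hzf]; ring_nf
  have h2 : |⟪u - z, f⟫| ≤ ‖u - z‖ * ‖f‖ := abs_real_inner_le_norm _ _
  have hlen : ((s ++ [k]).length : ℝ) ≤ ((s ++ k :: t).length : ℝ) := by
    simp [List.length_append]
  have hsq : ‖u‖ ^ 2 - ‖z‖ ^ 2 ≤ ‖u‖ ^ 2 - ‖pl L (s ++ k :: t) u‖ ^ 2 := by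
    have h0 : (0:ℝ) ≤ ‖pl L (s ++ k :: t) u‖ := norm_nonneg _
    nlinarith
  calc |⟪u, f⟫| ≤ ‖u - z‖ * ‖f‖ := by rw [h1]; exact h2
    _ ≤ (Real.sqrt (s ++ [k]).length * Real.sqrt (‖u‖ ^ 2 - ‖z‖ ^ 2)) * ‖f‖ := by
        apply mul_le_mul_of_nonneg_right hdrop (norm_nonneg f)
    _ ≤ (Real.sqrt (s ++ k :: t).length
        * Real.sqrt (‖u‖ ^ 2 - ‖pl L (s ++ k :: t) u‖ ^ 2)) * ‖f‖ := by
        apply mul_le_mul_of_nonneg_right _ (norm_nonneg f)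
        exact mul_le_mul (Real.sqrt_le_sqrt hlen) (Real.sqrt_le_sqrt hsq)
          (Real.sqrt_nonneg _) (Real.sqrt_nonneg _)
    _ = ‖f‖ * (Real.sqrt (s ++ k :: t).length
        * Real.sqrt (‖u‖ ^ 2 - ‖pl L (s ++ k :: t) u‖ ^ 2)) := by ring

lemma sum_sqrt_le (s : Finset ℕ) (u : ℕ → ℝ) (hu : ∀ i ∈ s, 0 ≤ u i) :
    ∑ i ∈ s, Real.sqrt (u i) ≤ Real.sqrt s.card * Real.sqrt (∑ i ∈ s, u i) := by
  rw [← Real.sqrt_mul (by positivity)]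
  rw [Real.le_sqrt (Finset.sum_nonneg fun i hi => Real.sqrt_nonneg _)
    (mul_nonneg (Nat.cast_nonneg _) (Finset.sum_nonneg hu))]
  calc (∑ i ∈ s, Real.sqrt (u i)) ^ 2 ≤ s.card * ∑ i ∈ s, Real.sqrt (u i) ^ 2 :=
        sq_sum_le_card_mul_sum_sq
    _ = s.card * ∑ i ∈ s, u i := by
        congr 1
        exact Finset.sum_congr rfl fun i hi => Real.sq_sqrt (hu i hi)

lemma tele_sum {G : Type*} [AddCommGroup G] (g : ℕ → G) (m n : ℕ) (h : m ≤ n) :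
    ∑ l ∈ Finset.Ico m n, (g l - g (l + 1)) = g m - g n := by
  induction n, h using Nat.le_induction with
  | base => simp
  | succ n hmn ih =>
    rw [Finset.sum_Ico_succ_top hmn, ih]
    abel


noncomputable def Tm (y : H) : H := pl L (List.finRange K) y
noncomputable def Sm (y : H) : H := pl L (List.finRange K).reverse y

lemma norm_Tm_le (y : H) : ‖Tm L y‖ ≤ ‖y‖ := norm_pl_le L _ y
lemma norm_Sm_le (y : H) : ‖Sm L y‖ ≤ ‖y‖ := norm_pl_le L _ y

lemma Sm_adjoint (x y : H) : ⟪Sm L x, y⟫ = ⟪x, Tm L y⟫ := by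
  have := pl_adjoint L (List.finRange K).reverse x y
  rwa [List.reverse_reverse] at this

lemma inner_iter (m : ℕ) (u v : H) : ⟪(Sm L)^[m] u, v⟫ = ⟪u, (Tm L)^[m] v⟫ := by
  induction m generalizing u with
  | zero => simp
  | succ m ih =>
    rw [Function.iterate_succ_apply, Function.iterate_succ_apply']
    rw [ih (Sm L u), Sm_adjoint]

lemma Tm_drop (y : H) :
    ‖y - Tm L y‖ ≤ Real.sqrt K * Real.sqrt (‖y‖ ^ 2 - ‖Tm L y‖ ^ 2) := by
  have := pl_drop L (List.finRange K) y
  rwa [List.length_finRange] at this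

lemma a_antitone (x₀ : H) : Antitone (fun n => ‖(Tm L)^[n] x₀‖) := by
  apply antitone_nat_of_succ_le
  intro n
  rw [Function.iterate_succ_apply']
  exact norm_Tm_le L _

lemma E_antitone (x₀ : H) {m n : ℕ} (h : m ≤ n) :
    ‖(Tm L)^[n] x₀‖ ^ 2 ≤ ‖(Tm L)^[m] x₀‖ ^ 2 :=
  pow_le_pow_left₀ (norm_nonneg _) (a_antitone L x₀ h) 2

lemma diff_bound (x₀ : H) {m n : ℕ} (h : m ≤ n) :
    ‖(Tm L)^[m] x₀ - (Tm L)^[n] x₀‖ ≤ Real.sqrt K *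
      (Real.sqrt ((n : ℝ) - m) *
        Real.sqrt (‖(Tm L)^[m] x₀‖ ^ 2 - ‖(Tm L)^[n] x₀‖ ^ 2)) := by
  have htele : (Tm L)^[m] x₀ - (Tm L)^[n] x₀
      = ∑ l ∈ Finset.Ico m n, ((Tm L)^[l] x₀ - (Tm L)^[l+1] x₀) :=
    (tele_sum (fun l => (Tm L)^[l] x₀) m n h).symm
  have hterm : ∀ l ∈ Finset.Ico m n, ‖(Tm L)^[l] x₀ - (Tm L)^[l+1] x₀‖ ≤
      Real.sqrt K * Real.sqrt (‖(Tm L)^[l] x₀‖ ^ 2 - ‖(Tm L)^[l+1] x₀‖ ^ 2) := by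
    intro l _
    have := Tm_drop L ((Tm L)^[l] x₀)
    rwa [← Function.iterate_succ_apply' (Tm L) l x₀] at this
  have hsum : ∑ l ∈ Finset.Ico m n,
      Real.sqrt (‖(Tm L)^[l] x₀‖ ^ 2 - ‖(Tm L)^[l+1] x₀‖ ^ 2) ≤
      Real.sqrt ((n : ℝ) - m) *
        Real.sqrt (‖(Tm L)^[m] x₀‖ ^ 2 - ‖(Tm L)^[n] x₀‖ ^ 2) := by
    have hcs := sum_sqrt_le (Finset.Ico m n)
      (fun l => ‖(Tm L)^[l] x₀‖ ^ 2 - ‖(Tm L)^[l+1] x₀‖ ^ 2)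
      (fun l hl => by
        linarith [E_antitone L x₀ (Nat.le_add_right l 1)])
    rw [Nat.card_Ico] at hcs
    rw [tele_sum (fun l => ‖(Tm L)^[l] x₀‖ ^ 2) m n h] at hcs
    rwa [Nat.cast_sub h] at hcs
  calc ‖(Tm L)^[m] x₀ - (Tm L)^[n] x₀‖
      ≤ ∑ l ∈ Finset.Ico m n, ‖(Tm L)^[l] x₀ - (Tm L)^[l+1] x₀‖ := by
        rw [htele]; exact norm_sum_le _ _
    _ ≤ ∑ l ∈ Finset.Ico m n,
        Real.sqrt K * Real.sqrt (‖(Tm L)^[l] x₀‖ ^ 2 - ‖(Tm L)^[l+1] x₀‖ ^ 2) :=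
        Finset.sum_le_sum hterm
    _ = Real.sqrt K * ∑ l ∈ Finset.Ico m n,
        Real.sqrt (‖(Tm L)^[l] x₀‖ ^ 2 - ‖(Tm L)^[l+1] x₀‖ ^ 2) := by
        rw [Finset.mul_sum]
    _ ≤ _ := by
        apply mul_le_mul_of_nonneg_left hsum (Real.sqrt_nonneg _)

lemma inner_x0_le (f : Fin K → H) (hf : ∀ j, f j ∈ (L j)ᗮ) (v : H) :
    ⟪v, ∑ j, f j⟫ ≤ (∑ j, ‖f j‖) *
      (Real.sqrt K * Real.sqrt (‖v‖ ^ 2 - ‖Sm L v‖ ^ 2)) := by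
  rw [inner_sum]
  calc ∑ j, ⟪v, f j⟫ ≤ ∑ j, |⟪v, f j⟫| := Finset.sum_le_sum fun j _ => le_abs_self _
    _ ≤ ∑ j, ‖f j‖ * (Real.sqrt K * Real.sqrt (‖v‖ ^ 2 - ‖Sm L v‖ ^ 2)) := by
        apply Finset.sum_le_sum
        intro j _
        have := pl_inner_orthogonal L (List.finRange K).reverse j
          (by simp [List.mem_reverse]) (f j) v (hf j)
        rwa [List.length_reverse, List.length_finRange] at this
    _ = (∑ j, ‖f j‖) * (Real.sqrt K * Real.sqrt (‖v‖ ^ 2 - ‖Sm L v‖ ^ 2)) := by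
        rw [← Finset.sum_mul]


lemma star_ineq (f : Fin K → H) (hf : ∀ j, f j ∈ (L j)ᗮ) (x₀ : H) (hx : x₀ = ∑ j, f j)
    (n p q : ℕ) (hpq : p + q = n) (hq : 1 ≤ q) :
    ‖(Tm L)^[n] x₀‖ ^ 2 ≤
      ‖(Tm L)^[n] x₀‖ * (Real.sqrt K * (Real.sqrt q *
        Real.sqrt (‖(Tm L)^[p] x₀‖ ^ 2 - ‖(Tm L)^[n] x₀‖ ^ 2)))
      + (∑ j, ‖f j‖) * (Real.sqrt K * (‖(Tm L)^[n] x₀‖ / Real.sqrt q)) := by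
  set xn : H := (Tm L)^[n] x₀ with hxn
  set a : ℝ := ‖xn‖ with ha
  have ha0 : 0 ≤ a := norm_nonneg _
  set β : ℕ → ℝ := fun m => ‖(Sm L)^[m] xn‖ ^ 2 with hβ
  have hβmono : Antitone β := by
    apply antitone_nat_of_succ_le
    intro m
    show ‖(Sm L)^[m+1] xn‖ ^ 2 ≤ ‖(Sm L)^[m] xn‖ ^ 2
    rw [Function.iterate_succ_apply']
    exact pow_le_pow_left₀ (norm_nonneg _) (norm_Sm_le L _) 2
  have hβ0 : β 0 = a ^ 2 := by simp [hβ, ha]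
  have hβnn : ∀ m, 0 ≤ β m := fun m => sq_nonneg _
  -- pigeonhole
  have hpn : p < n := by omega
  have hne : (Finset.Ico p n).Nonempty := ⟨p, by simp [hpn]⟩
  have htl : ∑ m ∈ Finset.Ico p n, (β m - β (m+1)) = β p - β n :=
    tele_sum β p n (le_of_lt hpn)
  have hex : ∃ m ∈ Finset.Ico p n, β m - β (m+1) ≤ a ^ 2 / q := by
    by_contra hcon
    push_neg at hcon
    have hlt := Finset.sum_lt_sum_of_nonempty hne hcon
    rw [Finset.sum_const, Nat.card_Ico, htl] at hlt
    have hcard : ((n - p : ℕ) : ℝ) = (q : ℝ) := by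
      congr 1; omega
    rw [nsmul_eq_mul, hcard] at hlt
    have hq0 : (0:ℝ) < q := by exact_mod_cast hq
    rw [mul_div_cancel₀ _ (ne_of_gt hq0)] at hlt
    have h1 : β p ≤ a ^ 2 := hβ0 ▸ hβmono (Nat.zero_le p)
    have h2 : 0 ≤ β n := hβnn n
    linarith
  obtain ⟨m, hm, hdropm⟩ := hex
  rw [Finset.mem_Ico] at hm
  -- upper bound
  have hupper : ⟪(Sm L)^[m] xn, x₀⟫ ≤ (∑ j, ‖f j‖) * (Real.sqrt K * (a / Real.sqrt q)) := by
    have h1 := inner_x0_le L f hf ((Sm L)^[m] xn)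
    rw [← hx] at h1
    have h2 : ‖Sm L ((Sm L)^[m] xn)‖ = ‖(Sm L)^[m+1] xn‖ := by
      rw [Function.iterate_succ_apply']
    rw [h2] at h1
    have h3 : Real.sqrt (‖(Sm L)^[m] xn‖ ^ 2 - ‖(Sm L)^[m+1] xn‖ ^ 2) ≤ a / Real.sqrt q := by
      have h4 : ‖(Sm L)^[m] xn‖ ^ 2 - ‖(Sm L)^[m+1] xn‖ ^ 2 ≤ a ^ 2 / q := hdropm
      have h5 := Real.sqrt_le_sqrt h4
      have hq0 : (0:ℝ) ≤ q := Nat.cast_nonneg q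
      rw [Real.sqrt_div (sq_nonneg a), Real.sqrt_sq ha0] at h5
      exact h5
    calc ⟪(Sm L)^[m] xn, x₀⟫
        ≤ (∑ j, ‖f j‖) * (Real.sqrt K *
            Real.sqrt (‖(Sm L)^[m] xn‖ ^ 2 - ‖(Sm L)^[m+1] xn‖ ^ 2)) := h1
      _ ≤ (∑ j, ‖f j‖) * (Real.sqrt K * (a / Real.sqrt q)) := by
          apply mul_le_mul_of_nonneg_left _ (Finset.sum_nonneg fun j _ => norm_nonneg _)
          exact mul_le_mul_of_nonneg_left h3 (Real.sqrt_nonneg _)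
  -- adjointness
  have hadj : ⟪(Sm L)^[m] xn, x₀⟫ = ⟪xn, (Tm L)^[m] x₀⟫ := inner_iter L m xn x₀
  -- lower bound
  have hdiff : ‖(Tm L)^[m] x₀ - xn‖ ≤ Real.sqrt K * (Real.sqrt q *
      Real.sqrt (‖(Tm L)^[p] x₀‖ ^ 2 - a ^ 2)) := by
    have h1 := diff_bound L x₀ (le_of_lt hm.2)
    rw [← hxn, ← ha] at h1
    have h2 : Real.sqrt ((n:ℝ) - m) ≤ Real.sqrt q := by
      apply Real.sqrt_le_sqrt
      have : (m:ℝ) ≥ p := by exact_mod_cast hm.1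
      have : (n:ℝ) = p + q := by exact_mod_cast hpq.symm
      linarith [hm.1]
    have h3 : Real.sqrt (‖(Tm L)^[m] x₀‖ ^ 2 - a ^ 2) ≤
        Real.sqrt (‖(Tm L)^[p] x₀‖ ^ 2 - a ^ 2) := by
      apply Real.sqrt_le_sqrt
      have := E_antitone L x₀ hm.1
      linarith
    calc ‖(Tm L)^[m] x₀ - xn‖ ≤ Real.sqrt K * (Real.sqrt ((n:ℝ) - m) *
          Real.sqrt (‖(Tm L)^[m] x₀‖ ^ 2 - a ^ 2)) := h1
      _ ≤ Real.sqrt K * (Real.sqrt q *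
          Real.sqrt (‖(Tm L)^[p] x₀‖ ^ 2 - a ^ 2)) := by
          apply mul_le_mul_of_nonneg_left _ (Real.sqrt_nonneg _)
          exact mul_le_mul h2 h3 (Real.sqrt_nonneg _) (Real.sqrt_nonneg _)
  have hlow : a ^ 2 ≤ ⟪xn, (Tm L)^[m] x₀⟫ +
      a * (Real.sqrt K * (Real.sqrt q *
        Real.sqrt (‖(Tm L)^[p] x₀‖ ^ 2 - a ^ 2))) := by
    have h1 : ⟪xn, (Tm L)^[m] x₀⟫ = ⟪xn, xn⟫ + ⟪xn, (Tm L)^[m] x₀ - xn⟫ := by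
      rw [inner_sub_right]; ring
    have h2 : ⟪xn, xn⟫ = a ^ 2 := real_inner_self_eq_norm_sq xn
    have h3 : |⟪xn, (Tm L)^[m] x₀ - xn⟫| ≤ a * ‖(Tm L)^[m] x₀ - xn‖ :=
      abs_real_inner_le_norm _ _
    have h4 : -(a * ‖(Tm L)^[m] x₀ - xn‖) ≤ ⟪xn, (Tm L)^[m] x₀ - xn⟫ := by
      cases abs_le.mp h3 with
      | intro hl hr => exact hl
    have h5 : a * ‖(Tm L)^[m] x₀ - xn‖ ≤ a * (Real.sqrt K * (Real.sqrt q *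
        Real.sqrt (‖(Tm L)^[p] x₀‖ ^ 2 - a ^ 2))) :=
      mul_le_mul_of_nonneg_left hdiff ha0
    linarith
  calc a ^ 2 ≤ ⟪xn, (Tm L)^[m] x₀⟫ +
      a * (Real.sqrt K * (Real.sqrt q *
        Real.sqrt (‖(Tm L)^[p] x₀‖ ^ 2 - a ^ 2))) := hlow
    _ ≤ (∑ j, ‖f j‖) * (Real.sqrt K * (a / Real.sqrt q)) +
      a * (Real.sqrt K * (Real.sqrt q *
        Real.sqrt (‖(Tm L)^[p] x₀‖ ^ 2 - a ^ 2))) := by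
        rw [← hadj]
        linarith [hupper]
    _ = _ := by ring


set_option maxHeartbeats 1000000 in
lemma main_bound (hK : 0 < K) (f : Fin K → H) (hf : ∀ j, f j ∈ (L j)ᗮ)
    (x₀ : H) (hx : x₀ = ∑ j, f j) :
    ∀ n : ℕ, 1 ≤ n → ‖(Tm L)^[n] x₀‖ ^ 2 ≤
      (32 * K * Real.sqrt K * (∑ j, ‖f j‖) ^ 2 + 1) / Real.sqrt n := by
  set F : ℝ := ∑ j, ‖f j‖ with hF
  have hF0 : 0 ≤ F := Finset.sum_nonneg fun j _ => norm_nonneg _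
  set M : ℝ := 32 * K * Real.sqrt K * F ^ 2 + 1 with hM
  have hK1 : (1:ℝ) ≤ K := by exact_mod_cast hK
  have hsK1 : (1:ℝ) ≤ Real.sqrt K := by
    rw [show (1:ℝ) = Real.sqrt 1 by simp]
    exact Real.sqrt_le_sqrt hK1
  have hprod0 : (0:ℝ) ≤ 32 * K * Real.sqrt K * F ^ 2 := by positivity
  have hM1 : (1:ℝ) ≤ M := by rw [hM]; linarith
  have hM0 : (0:ℝ) < M := by linarith
  have haF : ∀ n : ℕ, ‖(Tm L)^[n] x₀‖ ≤ F := by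
    intro n
    calc ‖(Tm L)^[n] x₀‖ ≤ ‖(Tm L)^[0] x₀‖ := a_antitone L x₀ (Nat.zero_le n)
      _ = ‖x₀‖ := by simp
      _ ≤ F := by rw [hx, hF]; exact norm_sum_le _ _
  have hs32 : Real.sqrt 32 ≤ 6 := by
    rw [show (6:ℝ) = Real.sqrt 36 by
      rw [show (36:ℝ) = 6 ^ 2 by norm_num, Real.sqrt_sq (by norm_num)]]
    exact Real.sqrt_le_sqrt (by norm_num)
  have hcoef : (0:ℝ) ≤ ((K:ℝ) - 1) * Real.sqrt K * F ^ 2 := by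
    apply mul_nonneg (mul_nonneg (by linarith) (Real.sqrt_nonneg _)) (sq_nonneg F)
  clear_value F M
  intro n
  induction n using Nat.strong_induction_on with
  | _ n IH =>
  intro hn1
  have hsn0 : (0:ℝ) < Real.sqrt n := Real.sqrt_pos.mpr (by exact_mod_cast hn1)
  by_cases hsmall : n < 32 * K
  · -- base case
    rw [le_div_iff₀ hsn0]
    have h1 : ‖(Tm L)^[n] x₀‖ ^ 2 ≤ F ^ 2 :=
      pow_le_pow_left₀ (norm_nonneg _) (haF n) 2
    have h2 : Real.sqrt n ≤ 6 * Real.sqrt K := by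
      calc Real.sqrt n ≤ Real.sqrt (32 * K) := by
            apply Real.sqrt_le_sqrt
            exact_mod_cast le_of_lt hsmall
        _ = Real.sqrt 32 * Real.sqrt K := Real.sqrt_mul (by norm_num) _
        _ ≤ 6 * Real.sqrt K := by
            apply mul_le_mul_of_nonneg_right hs32 (Real.sqrt_nonneg _)
    calc ‖(Tm L)^[n] x₀‖ ^ 2 * Real.sqrt n ≤ F ^ 2 * (6 * Real.sqrt K) := by
          apply mul_le_mul h1 h2 (le_of_lt hsn0) (sq_nonneg F)
      _ ≤ M := by rw [hM]; nlinarith [hcoef, sq_nonneg F, hsK1]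
  · -- main case
    push_neg at hsmall
    obtain ⟨q, hqdef⟩ : ∃ q : ℕ, q = Nat.sqrt (n / (8 * K)) := ⟨_, rfl⟩
    have h8K : 0 < 8 * K := by omega
    have hfl : 4 ≤ n / (8 * K) := by
      rw [Nat.le_div_iff_mul_le h8K]; omega
    have hq2 : 2 ≤ q := by
      rw [hqdef]
      have h := Nat.sqrt_le_sqrt hfl
      simpa [show Nat.sqrt 4 = 2 from by norm_num] using h
    have hq1 : 1 ≤ q := by omega
    have h8Kq : 8 * K * (q * q) ≤ n := by
      have h1 : q ^ 2 ≤ n / (8 * K) := by rw [hqdef]; exact Nat.sqrt_le' _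
      have h1' : q * q ≤ n / (8 * K) := by simpa [pow_two] using h1
      have h2 : q * q * (8 * K) ≤ n := (Nat.le_div_iff_mul_le h8K).mp h1'
      calc 8 * K * (q * q) = q * q * (8 * K) := by ring
        _ ≤ n := h2
    have hqn : q < n := by nlinarith [h8Kq, hq1, hK]
    set p : ℕ := n - q with hpdef
    clear_value p
    have hppq : p + q = n := by omega
    have hp1 : 1 ≤ p := by omega
    have hpn : p < n := by omega
    have hub : n ≤ 32 * K * (q * q) := by
      have h1 : n / (8*K) < (q + 1) ^ 2 := by rw [hqdef]; exact Nat.lt_succ_sqrt' _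
      have h1' : n / (8*K) < (q + 1) * (q + 1) := by
        calc n / (8*K) < (q + 1) ^ 2 := h1
          _ = (q+1) * (q+1) := by ring
      have hdm := Nat.div_add_mod n (8*K)
      have hml : n % (8*K) < 8*K := Nat.mod_lt n h8K
      have hq12 : (q+1)*(q+1) ≤ 4*(q*q) := by nlinarith [hq1]
      nlinarith [hdm, hml, h1', hq12, hK]
    -- real versions
    have hq0R : (0:ℝ) < q := by exact_mod_cast hq1
    have hsq0 : (0:ℝ) < Real.sqrt q := Real.sqrt_pos.mpr hq0R
    have hp0R : (0:ℝ) < p := by exact_mod_cast hp1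
    have hsp0 : (0:ℝ) < Real.sqrt p := Real.sqrt_pos.mpr hp0R
    have h8KqR : 8 * (K:ℝ) * (q:ℝ) ^ 2 ≤ (n:ℝ) := by
      have h := (Nat.cast_le (α := ℝ)).mpr h8Kq
      push_cast at h
      ring_nf at h ⊢
      linarith
    have hubR : (n:ℝ) ≤ 32 * (K:ℝ) * (q:ℝ) ^ 2 := by
      have h := (Nat.cast_le (α := ℝ)).mpr hub
      push_cast at h
      ring_nf at h ⊢
      linarith
    have hpR : (p:ℝ) = (n:ℝ) - q := by
      have h := congrArg (Nat.cast : ℕ → ℝ) hppq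
      push_cast at h
      linarith
    -- star inequality
    set a : ℝ := ‖(Tm L)^[n] x₀‖ with ha
    set Ep : ℝ := ‖(Tm L)^[p] x₀‖ ^ 2 with hEp
    have ha0 : 0 ≤ a := norm_nonneg _
    have hEpn : a ^ 2 ≤ Ep := E_antitone L x₀ (le_of_lt hpn)
    have hstar := star_ineq L f hf x₀ hx n p q hppq hq1
    rw [← ha, ← hEp, ← hF] at hstar
    have hIH : Ep ≤ M / Real.sqrt p := IH p hpn hp1
    clear_value a Ep
    by_cases hcase : a ≤ 2 * (F * (Real.sqrt K / Real.sqrt q))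
    · -- small a case
      rw [le_div_iff₀ hsn0]
      have hsq : a ^ 2 ≤ 4 * F ^ 2 * ((K:ℝ) / q) := by
        have h1 : a ^ 2 ≤ (2 * (F * (Real.sqrt K / Real.sqrt q))) ^ 2 :=
          pow_le_pow_left₀ ha0 hcase 2
        have h2 : (Real.sqrt K / Real.sqrt q) ^ 2 = (K:ℝ) / q := by
          rw [div_pow, Real.sq_sqrt (by positivity : (0:ℝ) ≤ (K:ℝ)),
            Real.sq_sqrt (le_of_lt hq0R)]
        calc a ^ 2 ≤ (2 * (F * (Real.sqrt K / Real.sqrt q))) ^ 2 := h1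
          _ = 4 * F ^ 2 * (Real.sqrt K / Real.sqrt q) ^ 2 := by ring
          _ = 4 * F ^ 2 * ((K:ℝ) / q) := by rw [h2]
      have hsn6 : Real.sqrt n ≤ 6 * Real.sqrt K * q := by
        calc Real.sqrt n ≤ Real.sqrt (32 * K * (q:ℝ)^2) := Real.sqrt_le_sqrt hubR
          _ = Real.sqrt (32 * K) * Real.sqrt ((q:ℝ)^2) := by
              rw [← Real.sqrt_mul (by positivity)]
          _ = Real.sqrt 32 * Real.sqrt K * q := by
              rw [Real.sqrt_mul (by norm_num), Real.sqrt_sq (le_of_lt hq0R)]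
          _ ≤ 6 * Real.sqrt K * q := by
              apply mul_le_mul_of_nonneg_right _ (le_of_lt hq0R)
              apply mul_le_mul_of_nonneg_right hs32 (Real.sqrt_nonneg _)
      calc a ^ 2 * Real.sqrt n ≤ (4 * F ^ 2 * ((K:ℝ) / q)) * (6 * Real.sqrt K * q) := by
            apply mul_le_mul hsq hsn6 (le_of_lt hsn0) (by positivity)
        _ = 24 * K * Real.sqrt K * F ^ 2 := by
            field_simp
            ring
        _ ≤ M := by rw [hM]; nlinarith [hcoef, sq_nonneg F, hsK1]
    · -- big a case
      push_neg at hcase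
      have ha0' : 0 < a := lt_of_le_of_lt (by positivity) hcase
      have hΔ0 : 0 ≤ Ep - a ^ 2 := by linarith
      set R : ℝ := Real.sqrt K * (Real.sqrt q * Real.sqrt (Ep - a ^ 2)) with hR
      clear_value R
      have hR0 : 0 ≤ R := by rw [hR]; positivity
      have hkey : a ^ 2 ≤ 4 * K * q * (Ep - a ^ 2) := by
        have h1 : F * (Real.sqrt K * (a / Real.sqrt q)) < a * (a / 2) := by
          calc F * (Real.sqrt K * (a / Real.sqrt q))
              = (a / 2) * (2 * (F * (Real.sqrt K / Real.sqrt q))) := by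
                field_simp
            _ < (a / 2) * a := mul_lt_mul_of_pos_left hcase (by positivity)
            _ = a * (a / 2) := by ring
        have h2 : a ^ 2 / 2 < a * R := by rw [hR]; nlinarith [hstar, h1]
        have h3 : a / 2 < R := by
          have h4 : a * (a / 2) < a * R := by nlinarith [h2]
          exact (mul_lt_mul_iff_right₀ ha0').mp h4
        have h4 : (a / 2) ^ 2 ≤ R ^ 2 := pow_le_pow_left₀ (by positivity) (le_of_lt h3) 2
        have h5 : R ^ 2 = (K:ℝ) * ((q:ℝ) * (Ep - a ^ 2)) := by
          rw [hR, mul_pow, mul_pow, Real.sq_sqrt (by positivity : (0:ℝ) ≤ (K:ℝ)),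
            Real.sq_sqrt (le_of_lt hq0R), Real.sq_sqrt hΔ0]
        nlinarith [h4, h5]
      -- conclude
      set A : ℝ := 4 * (K:ℝ) * q with hA
      clear_value A
      have hA0 : (0:ℝ) < A := by rw [hA]; positivity
      have hsqrtineq : A * Real.sqrt n ≤ (1 + A) * Real.sqrt p := by
        have hLHS : A * Real.sqrt n = Real.sqrt (A ^ 2 * n) := by
          rw [Real.sqrt_mul (by positivity), Real.sqrt_sq (le_of_lt hA0)]
        have hRHS : (1 + A) * Real.sqrt p = Real.sqrt ((1 + A) ^ 2 * p) := by
          rw [Real.sqrt_mul (by positivity), Real.sqrt_sq (by positivity)]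
        rw [hLHS, hRHS]
        apply Real.sqrt_le_sqrt
        rw [hpR, hA]
        have hq1R : (1:ℝ) ≤ (q:ℝ) := by exact_mod_cast hq1
        have hKq1 : (1:ℝ) ≤ (K:ℝ) * q := by
          have h := mul_le_mul hK1 hq1R zero_le_one (by positivity : (0:ℝ) ≤ (K:ℝ))
          simpa using h
        have m1 : (q:ℝ) ≤ (K:ℝ) * (q:ℝ) ^ 2 := by
          have h := mul_le_mul_of_nonneg_right hKq1 (le_of_lt hq0R)
          calc (q:ℝ) = 1 * q := (one_mul _).symm
            _ ≤ (K:ℝ) * q * q := h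
            _ = (K:ℝ) * (q:ℝ) ^ 2 := by ring
        have m2 : 7 * (K:ℝ) * (q:ℝ) ^ 2 ≤ (n:ℝ) - q := by linarith only [h8KqR, m1]
        have m3 : (0:ℝ) ≤ 1 + 8 * (K:ℝ) * q := by positivity
        have n1 : (0:ℝ) ≤ (K:ℝ) * (q:ℝ) ^ 2 := by positivity
        have n2 : (0:ℝ) ≤ (K:ℝ) ^ 2 * (q:ℝ) ^ 3 := by positivity
        have hcomb := mul_le_mul_of_nonneg_left m2 m3
        ring_nf at hcomb n1 n2 ⊢
        linarith only [hcomb, n1, n2]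
      have t1 : a ^ 2 * (1 + A) ≤ A * Ep := by
        have h := hkey
        ring_nf at h ⊢
        linarith only [h]
      have hEp0 : 0 ≤ Ep := by rw [hEp]; positivity
      have hEpM : Ep * Real.sqrt p ≤ M := (le_div_iff₀ hsp0).mp hIH
      rw [le_div_iff₀ hsn0]
      have s1 : a ^ 2 * (1 + A) * Real.sqrt n ≤ A * Ep * Real.sqrt n :=
        mul_le_mul_of_nonneg_right t1 (le_of_lt hsn0)
      have s2 : A * Ep * Real.sqrt n ≤ Ep * ((1 + A) * Real.sqrt p) := by
        have h := mul_le_mul_of_nonneg_left hsqrtineq hEp0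
        calc A * Ep * Real.sqrt n = Ep * (A * Real.sqrt n) := by ring
          _ ≤ Ep * ((1 + A) * Real.sqrt p) := h
      have s3 : Ep * ((1 + A) * Real.sqrt p) ≤ M * (1 + A) := by
        calc Ep * ((1 + A) * Real.sqrt p) = (Ep * Real.sqrt p) * (1 + A) := by ring
          _ ≤ M * (1 + A) := mul_le_mul_of_nonneg_right hEpM (by positivity)
      have s4 : (a ^ 2 * Real.sqrt n) * (1 + A) ≤ M * (1 + A) := by
        calc (a ^ 2 * Real.sqrt n) * (1 + A) = a ^ 2 * (1 + A) * Real.sqrt n := by ring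
          _ ≤ A * Ep * Real.sqrt n := s1
          _ ≤ Ep * ((1 + A) * Real.sqrt p) := s2
          _ ≤ M * (1 + A) := s3
      exact le_of_mul_le_mul_right s4 (by positivity)

end AP

theorem alternating_projections_polynomial_rate
    {H : Type*} [NormedAddCommGroup H] [InnerProductSpace ℝ H] [CompleteSpace H]
    {K : ℕ} (hK : 0 < K) (L : Fin K → Submodule ℝ H)
    (hclosed : ∀ k, IsClosed ((L k : Set H))) [∀ k, CompleteSpace (L k)]
    (T : H → H)
    (hT : ∀ y : H, T y = Fin.foldl K (fun w k => (Submodule.orthogonalProjection (L k) w : H)) y)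
    (x₀ : H) (hx₀ : ∃ f : Fin K → H, (∀ j, f j ∈ (L j)ᗮ) ∧ x₀ = ∑ j, f j) :
    ∃ c : ℝ, 0 < c ∧ ∀ n : ℕ, 1 ≤ n →
      ‖T^[n] x₀‖ ≤ c * (n : ℝ) ^ (-(1 / (4 * (K : ℝ) * Real.sqrt K + 2))) := by
  obtain ⟨f, hf, hx⟩ := hx₀
  have hTeq : T = Tm L := by
    funext y
    rw [hT y]
    exact Fin.foldl_eq_foldl_finRange _ _
  set M : ℝ := 32 * K * Real.sqrt K * (∑ j, ‖f j‖) ^ 2 + 1 with hM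
  have hK1 : (1:ℝ) ≤ K := by exact_mod_cast hK
  have hsK1 : (1:ℝ) ≤ Real.sqrt K := by
    rw [show (1:ℝ) = Real.sqrt 1 by simp]
    exact Real.sqrt_le_sqrt hK1
  have hM1 : (1:ℝ) ≤ M := by
    have : (0:ℝ) ≤ 32 * K * Real.sqrt K * (∑ j, ‖f j‖) ^ 2 := by positivity
    rw [hM]; linarith
  have hM0 : (0:ℝ) < M := by linarith
  refine ⟨Real.sqrt M, Real.sqrt_pos.mpr hM0, ?_⟩
  intro n hn
  have hn1R : (1:ℝ) ≤ n := by exact_mod_cast hn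
  have hn0R : (0:ℝ) < n := by linarith
  have hsn0 : (0:ℝ) < Real.sqrt n := Real.sqrt_pos.mpr hn0R
  have hmb := main_bound L hK f hf x₀ hx n hn
  rw [← hTeq, ← hM] at hmb
  have h1 : ‖T^[n] x₀‖ ≤ Real.sqrt (M / Real.sqrt n) :=
    (Real.le_sqrt (norm_nonneg _) (by positivity)).mpr hmb
  have h2 : Real.sqrt (M / Real.sqrt n) = Real.sqrt M / Real.sqrt (Real.sqrt n) :=
    Real.sqrt_div (le_of_lt hM0) _
  have h3 : Real.sqrt (Real.sqrt n) = (n:ℝ) ^ ((1:ℝ)/4) := by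
    rw [Real.sqrt_eq_rpow, Real.sqrt_eq_rpow, ← Real.rpow_mul (Nat.cast_nonneg n)]
    norm_num
  have h4 : Real.sqrt M / (n:ℝ) ^ ((1:ℝ)/4) = Real.sqrt M * (n:ℝ) ^ (-(1:ℝ)/4) := by
    rw [div_eq_mul_inv, ← Real.rpow_neg (le_of_lt hn0R)]
    norm_num
  have h5 : (n:ℝ) ^ (-(1:ℝ)/4) ≤ (n:ℝ) ^ (-(1 / (4 * (K : ℝ) * Real.sqrt K + 2))) := by
    apply Real.rpow_le_rpow_of_exponent_le hn1R
    have hden : (4:ℝ) ≤ 4 * (K:ℝ) * Real.sqrt K + 2 := by nlinarith [hK1, hsK1]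
    have hpos : (0:ℝ) < 4 * (K:ℝ) * Real.sqrt K + 2 := by linarith
    have := one_div_le_one_div_of_le (by norm_num : (0:ℝ) < 4) hden
    linarith
  calc ‖T^[n] x₀‖ ≤ Real.sqrt (M / Real.sqrt n) := h1
    _ = Real.sqrt M / Real.sqrt (Real.sqrt n) := h2
    _ = Real.sqrt M * (n:ℝ) ^ (-(1:ℝ)/4) := by rw [h3, h4]
    _ ≤ Real.sqrt M * (n:ℝ) ^ (-(1 / (4 * (K : ℝ) * Real.sqrt K + 2))) :=
        mul_le_mul_of_nonneg_left h5 (Real.sqrt_nonneg _)
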